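/- Let g: ℕ → ℝ be additive with ∑_{X^{1/4} < p^k ≤ X} |A_g(X) − A_g(X/p^k) − λ(X) log p^k| / p^k = o(B_g(X)) for some λ(X) ≥ 0, where A_g and B_g are the usual mean and variance approximations. Then λ(X) ≪ B_g(X)/log X. -/

import Mathlib

set_option maxHeartbeats 1000000

open ArithmeticFunction


open Finset

/-- The set of prime powers `p^k ≤ Y` (as natural numbers `≥ 2`). -/
noncomputable def ppows (Y : ℝ) : Finset ℕ :=
  (Finset.Icc 2 ⌊Y⌋₊).filter IsPrimePow

/-- `A_g(Y) = ∑_{p^k ≤ Y} g(p^k) p^{-k} (1 - 1/p)` for real-valued `g`. -/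
noncomputable def AgR (g : ℕ → ℝ) (Y : ℝ) : ℝ :=
  ∑ q ∈ ppows Y, g q * (1 / (q : ℝ)) * (1 - 1 / ((q.minFac : ℝ)))

/-- `B_g(Y) = (∑_{p^k ≤ Y} g(p^k)² p^{-k})^{1/2}` for real-valued `g`. -/
noncomputable def BgR (g : ℕ → ℝ) (Y : ℝ) : ℝ :=
  Real.sqrt (∑ q ∈ ppows Y, (g q) ^ 2 / (q : ℝ))

/-- `g` is additive: `g(mn) = g(m) + g(n)` whenever `gcd(m,n) = 1`. -/
def IsAdditiveR (g : ℕ → ℝ) : Prop :=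
  ∀ m n : ℕ, Nat.Coprime m n → g (m * n) = g m + g n



/-- `log n! = ∑_{d ≤ n} Λ(d) ⌊n/d⌋`. -/
lemma log_factorial_eq (n : ℕ) :
    Real.log (n.factorial) = ∑ d ∈ Icc 1 n, Λ d * ((n / d : ℕ) : ℝ) := by
  have h1 : ((n.factorial : ℕ) : ℝ) = ∏ i ∈ Icc 1 n, (i : ℝ) := by
    rw [← Nat.cast_prod]
    norm_cast
    rw [← Finset.prod_Ico_id_eq_factorial n]
    congr 1
  rw [h1, Real.log_prod]
  · have h2 : ∀ i ∈ Icc 1 n, Real.log (i : ℕ) = ∑ d ∈ Icc 1 n, if d ∣ i then Λ d else 0 := by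
      intro i hi
      rw [mem_Icc] at hi
      rw [← ArithmeticFunction.vonMangoldt_sum, ← Finset.sum_filter]
      congr 1
      ext d
      simp only [Nat.mem_divisors, mem_filter, mem_Icc]
      constructor
      · rintro ⟨hd, hi0⟩
        exact ⟨⟨Nat.one_le_iff_ne_zero.2 (fun h => by simp [h] at hd; omega),
          le_trans (Nat.le_of_dvd (by omega) hd) hi.2⟩, hd⟩
      · rintro ⟨_, hd⟩
        exact ⟨hd, by omega⟩
    rw [Finset.sum_congr rfl h2, Finset.sum_comm]
    refine Finset.sum_congr rfl fun d _ => ?_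
    rw [Finset.sum_ite, Finset.sum_const, Finset.sum_const_zero, add_zero, nsmul_eq_mul,
      mul_comm]
    congr 2
    have : Icc 1 n = Ioc 0 n := rfl
    rw [this, Nat.Ioc_filter_dvd_card_eq_div n d]
  · intro i hi
    rw [mem_Icc] at hi
    have : (0:ℝ) < i := by exact_mod_cast hi.1
    linarith

lemma log_factorial_le (n : ℕ) : Real.log (n.factorial) ≤ n * Real.log n := by
  have h1 : ((n.factorial : ℕ) : ℝ) = ∏ i ∈ Icc 1 n, (i : ℝ) := by
    rw [← Nat.cast_prod]; norm_cast; rw [← Finset.prod_Ico_id_eq_factorial n]; congr 1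
  rw [h1, Real.log_prod (fun i hi => by
    rw [mem_Icc] at hi
    have : (0:ℝ) < i := by exact_mod_cast hi.1
    exact ne_of_gt this)]
  calc ∑ i ∈ Icc 1 n, Real.log i ≤ ∑ i ∈ Icc 1 n, Real.log n := by
        refine Finset.sum_le_sum fun i hi => ?_
        rw [mem_Icc] at hi
        exact Real.log_le_log (by exact_mod_cast hi.1) (by exact_mod_cast hi.2)
    _ ≤ n * Real.log n := by
        rw [Finset.sum_const, Nat.card_Icc, Nat.add_sub_cancel, nsmul_eq_mul]

lemma le_log_factorial {n : ℕ} (hn : 1 ≤ n) :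
    (n : ℝ) * Real.log n - n ≤ Real.log (n.factorial) := by
  have h := Real.pow_div_factorial_le_exp (x := (n:ℝ)) (by positivity) n
  have hfac : (0:ℝ) < n.factorial := by exact_mod_cast n.factorial_pos
  have hn' : (0:ℝ) < n := by exact_mod_cast hn
  have h2 : (n:ℝ) ^ n ≤ Real.exp n * n.factorial := by
    rw [div_le_iff₀ hfac] at h; linarith
  have h3 := Real.log_le_log (by positivity) h2
  rw [Real.log_pow, Real.log_mul (Real.exp_ne_zero _) (ne_of_gt hfac), Real.log_exp] at h3
  linarith

lemma theta_le (n : ℕ) :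
    ∑ p ∈ (Icc 1 n).filter Nat.Prime, Real.log p ≤ n * Real.log 4 := by
  have h1 : ∑ p ∈ (Icc 1 n).filter Nat.Prime, Real.log p
      = Real.log (primorial n) := by
    unfold primorial
    rw [← Real.log_prod (fun p hp => by
      rw [mem_filter] at hp
      have := hp.2.pos
      positivity), ← Nat.cast_prod]
    congr 2
    apply Finset.prod_congr _ (fun _ _ => rfl)
    ext p
    simp only [mem_filter, mem_Icc, mem_range]
    constructor
    · rintro ⟨⟨h1, h2⟩, hp⟩; exact ⟨by omega, hp⟩
    · rintro ⟨h1, hp⟩; exact ⟨⟨hp.one_lt.le.trans (le_refl _) |>.trans' (by omega), by omega⟩, hp⟩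
  rw [h1]
  calc Real.log (primorial n) ≤ Real.log ((4:ℕ) ^ n) := by
        apply Real.log_le_log (by exact_mod_cast primorial_pos n)
        exact_mod_cast primorial_le_4_pow n
    _ = n * Real.log 4 := by push_cast [Real.log_pow]; norm_num

/-- Mertens' first theorem, upper bound, primes. -/
lemma mertens_upper_primes {n : ℕ} (hn : 1 ≤ n) :
    ∑ p ∈ (Icc 1 n).filter Nat.Prime, Real.log p / p ≤ Real.log n + 2 := by
  have hn' : (0:ℝ) < n := by exact_mod_cast hn
  have key : ∑ p ∈ (Icc 1 n).filter Nat.Prime, Real.log p * (((n / p : ℕ)) : ℝ)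
      ≤ Real.log (n.factorial) := by
    rw [log_factorial_eq]
    have : ∀ p ∈ (Icc 1 n).filter Nat.Prime,
        Real.log p * (((n / p : ℕ)) : ℝ) = Λ p * (((n / p : ℕ)) : ℝ) := by
      intro p hp
      rw [mem_filter] at hp
      rw [ArithmeticFunction.vonMangoldt_apply_prime hp.2]
    rw [Finset.sum_congr rfl this]
    apply Finset.sum_le_sum_of_subset_of_nonneg (Finset.filter_subset _ _)
    intro d _ _
    have := ArithmeticFunction.vonMangoldt_nonneg (n := d)
    positivity
  have h2 : ∀ p ∈ (Icc 1 n).filter Nat.Prime,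
      Real.log p * ((n:ℝ)/p - 1) ≤ Real.log p * (((n / p : ℕ)) : ℝ) := by
    intro p hp
    rw [mem_filter, mem_Icc] at hp
    have hp2 := hp.2.two_le
    have hppos : (0:ℝ) < p := by exact_mod_cast hp.2.pos
    have hlt : n < (n / p + 1) * p := (Nat.div_lt_iff_lt_mul hp.2.pos).1 (Nat.lt_succ_self _)
    have hlt' : (n:ℝ) < ((n / p : ℕ) + 1) * p := by exact_mod_cast hlt
    have : (n:ℝ)/p - 1 ≤ ((n / p : ℕ) : ℝ) := by
      rw [div_sub_one (ne_of_gt hppos), div_le_iff₀ hppos]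
      nlinarith
    exact mul_le_mul_of_nonneg_left this (Real.log_nonneg (by exact_mod_cast hp.2.one_lt.le))
  have h3 := le_trans (Finset.sum_le_sum h2) key
  have h4 : ∑ p ∈ (Icc 1 n).filter Nat.Prime, Real.log p * ((n:ℝ)/p - 1)
      = (n:ℝ) * (∑ p ∈ (Icc 1 n).filter Nat.Prime, Real.log p / p)
        - ∑ p ∈ (Icc 1 n).filter Nat.Prime, Real.log p := by
    rw [Finset.mul_sum, ← Finset.sum_sub_distrib]
    refine Finset.sum_congr rfl fun p hp => ?_
    rw [mem_filter] at hp
    have hppos : (0:ℝ) < p := by exact_mod_cast hp.2.pos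
    field_simp
  have h5 := theta_le n
  have h6 := log_factorial_le n
  have hlog4 : Real.log 4 ≤ 2 := by
    rw [show (4:ℝ) = 2^2 by norm_num, Real.log_pow]
    have := Real.log_two_lt_d9
    push_cast
    linarith
  rw [h4] at h3
  have : (n:ℝ) * (∑ p ∈ (Icc 1 n).filter Nat.Prime, Real.log p / p)
      ≤ (n:ℝ) * Real.log n + n * 2 := by nlinarith
  calc ∑ p ∈ (Icc 1 n).filter Nat.Prime, Real.log p / p
      = ((n:ℝ) * ∑ p ∈ (Icc 1 n).filter Nat.Prime, Real.log p / p) / n := by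
        field_simp
    _ ≤ ((n:ℝ) * Real.log n + n * 2) / n := by gcongr
    _ = Real.log n + 2 := by field_simp

/-- Mertens' first theorem, lower bound, von Mangoldt weights. -/
lemma mertens_lower {n : ℕ} (hn : 1 ≤ n) :
    Real.log n - 1 ≤ ∑ d ∈ Icc 1 n, Λ d / d := by
  have hn' : (0:ℝ) < n := by exact_mod_cast hn
  have key : Real.log (n.factorial) ≤ (n:ℝ) * ∑ d ∈ Icc 1 n, Λ d / d := by
    rw [log_factorial_eq, Finset.mul_sum]
    refine Finset.sum_le_sum fun d hd => ?_
    rw [mem_Icc] at hd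
    have hd' : (0:ℝ) < d := by exact_mod_cast hd.1
    have h1 : (((n / d : ℕ)) : ℝ) ≤ (n:ℝ) / d := Nat.cast_div_le
    have := ArithmeticFunction.vonMangoldt_nonneg (n := d)
    calc Λ d * (((n / d : ℕ)) : ℝ) ≤ Λ d * ((n:ℝ)/d) := by gcongr
      _ = (n:ℝ) * (Λ d / d) := by ring
  have h2 := le_log_factorial hn
  have h3 : (n:ℝ) * Real.log n - n ≤ (n:ℝ) * ∑ d ∈ Icc 1 n, Λ d / d := by linarith
  have := (div_le_div_iff_of_pos_right hn').2 h3
  calc Real.log n - 1 = ((n:ℝ) * Real.log n - n) / n := by field_simp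
    _ ≤ ((n:ℝ) * ∑ d ∈ Icc 1 n, Λ d / d) / n := by gcongr
    _ = ∑ d ∈ Icc 1 n, Λ d / d := by field_simp

/-- Geometric-type sum: for `0 ≤ x ≤ 1/2`, `∑_{2 ≤ k ≤ n} k x^k ≤ cG * x²` with
`cG = 4 ∑' k, k (1/2)^k`. -/
lemma geom_aux : ∃ cG : ℝ, 0 < cG ∧ ∀ (x : ℝ) (n : ℕ), 0 ≤ x → x ≤ 1/2 →
    ∑ k ∈ Icc 2 n, (k : ℝ) * x ^ k ≤ cG * x ^ 2 := by
  have hsum : Summable (fun k : ℕ => (k : ℝ) * (1/2 : ℝ) ^ k) := by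
    have h12 : ‖(1/2 : ℝ)‖ < 1 := by rw [Real.norm_eq_abs, abs_of_pos]; norm_num; norm_num
    simpa using summable_pow_mul_geometric_of_norm_lt_one 1 h12
  set c : ℝ := ∑' k : ℕ, (k : ℝ) * (1/2 : ℝ) ^ k with hc
  refine ⟨4 * c + 1, ?_, ?_⟩
  · have : 0 ≤ c := tsum_nonneg fun k => by positivity
    linarith
  · intro x n hx hx2
    have step : ∀ k ∈ Icc 2 n, (k : ℝ) * x ^ k ≤ ((k : ℝ) * (1/2:ℝ)^k) * (4 * x^2) := by
      intro k hk
      rw [mem_Icc] at hk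
      obtain ⟨j, rfl⟩ : ∃ j, k = j + 2 := ⟨k - 2, by omega⟩
      have hxj : x ^ j ≤ (1/2:ℝ) ^ j := pow_le_pow_left₀ hx hx2 j
      have : x ^ (j+2) = x ^ j * x^2 := by ring
      have h2 : (1/2:ℝ) ^ (j+2) * 4 = (1/2:ℝ)^j := by
        rw [pow_add]; ring
      calc (↑(j+2) : ℝ) * x ^ (j+2) = (↑(j+2) : ℝ) * (x^j * x^2) := by rw [this]
        _ ≤ (↑(j+2) : ℝ) * ((1/2:ℝ)^j * x^2) := by
            have : (0:ℝ) ≤ (↑(j+2):ℝ) := by positivity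
            have hx2' : (0:ℝ) ≤ x^2 := by positivity
            gcongr
        _ = ((↑(j+2):ℝ) * (1/2:ℝ)^(j+2)) * (4 * x^2) := by rw [← h2]; ring
    calc ∑ k ∈ Icc 2 n, (k : ℝ) * x ^ k
        ≤ ∑ k ∈ Icc 2 n, ((k : ℝ) * (1/2:ℝ)^k) * (4 * x^2) := Finset.sum_le_sum step
      _ = (∑ k ∈ Icc 2 n, (k : ℝ) * (1/2:ℝ)^k) * (4 * x^2) := by rw [← Finset.sum_mul]
      _ ≤ c * (4 * x^2) := by
          have hle : ∑ k ∈ Icc 2 n, (k : ℝ) * (1/2:ℝ)^k ≤ c :=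
            hsum.sum_le_tsum _ (fun k _ => by positivity)
          have : (0:ℝ) ≤ 4 * x^2 := by positivity
          exact mul_le_mul_of_nonneg_right hle this
      _ ≤ (4 * c + 1) * x ^ 2 := by nlinarith [sq_nonneg x]

/-- `∑_{2 ≤ m ≤ n} log m / m² ≤ cH`, uniformly. -/
lemma logsq_aux : ∃ cH : ℝ, 0 < cH ∧ ∀ n : ℕ,
    ∑ m ∈ Icc 2 n, Real.log m / (m:ℝ) ^ 2 ≤ cH := by
  have hbound : ∀ m : ℕ, Real.log m / (m:ℝ)^2 ≤ 2 * (1 / (m:ℝ) ^ ((3:ℝ)/2)) := by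
    intro m
    rcases Nat.eq_zero_or_pos m with h | h
    · simp [h]
    · have hm : (1:ℝ) ≤ m := by exact_mod_cast h
      have hm0 : (0:ℝ) < m := by linarith
      have hs : (0:ℝ) < Real.sqrt m := Real.sqrt_pos.2 hm0
      have hlog : Real.log m ≤ 2 * Real.sqrt m := by
        have h1 : Real.log (Real.sqrt m) = Real.log m / 2 := Real.log_sqrt hm0.le
        have h2 : Real.log (Real.sqrt m) ≤ Real.sqrt m - 1 :=
          Real.log_le_sub_one_of_pos hs
        rw [h1] at h2
        linarith
      have hr : (m:ℝ) ^ ((3:ℝ)/2) = (m:ℝ) * Real.sqrt m := by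
        rw [show (3:ℝ)/2 = 1 + 1/2 by norm_num, Real.rpow_add hm0, Real.rpow_one,
          Real.sqrt_eq_rpow]
      have hms : Real.sqrt m * Real.sqrt m = m := Real.mul_self_sqrt hm0.le
      rw [hr]
      have h2 : Real.log m / (m:ℝ)^2 ≤ 2 * Real.sqrt m / (m:ℝ)^2 := by gcongr
      have h3 : 2 * Real.sqrt m / (m:ℝ)^2 = 2 * (1/((m:ℝ) * Real.sqrt m)) := by
        rw [mul_one_div, div_eq_div_iff (by positivity) (by positivity)]
        nlinarith [hms]
      linarith
  have hsum2 : Summable (fun m : ℕ => 2 * (1 / (m:ℝ) ^ ((3:ℝ)/2))) :=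
    (Real.summable_one_div_nat_rpow.2 (by norm_num)).mul_left 2
  have hsum : Summable (fun m : ℕ => Real.log m / (m:ℝ)^2) := by
    apply Summable.of_nonneg_of_le _ hbound hsum2
    intro m
    rcases Nat.eq_zero_or_pos m with h | h
    · simp [h]
    · have hm : (1:ℝ) ≤ m := by exact_mod_cast h
      have := Real.log_nonneg hm
      positivity
  refine ⟨(∑' m : ℕ, Real.log m / (m:ℝ)^2) + 1, ?_, fun n => ?_⟩
  · have : 0 ≤ ∑' m : ℕ, Real.log m / (m:ℝ)^2 := tsum_nonneg fun m => by
      rcases Nat.eq_zero_or_pos m with h | h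
      · simp [h]
      · have hm : (1:ℝ) ≤ m := by exact_mod_cast h
        have := Real.log_nonneg hm
        positivity
    linarith
  · have := hsum.sum_le_tsum (Icc 2 n)
      (fun m _ => by
        rcases Nat.eq_zero_or_pos m with h | h
        · simp [h]
        · have hm : (1:ℝ) ≤ m := by exact_mod_cast h
          have := Real.log_nonneg hm
          positivity)
    linarith

lemma mem_ppows_iff {Y : ℝ} (hY : 0 ≤ Y) {q : ℕ} :
    q ∈ ppows Y ↔ IsPrimePow q ∧ (q : ℝ) ≤ Y := by
  unfold ppows
  rw [mem_filter, mem_Icc, Nat.le_floor_iff hY]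
  exact ⟨fun ⟨⟨_, h2⟩, h3⟩ => ⟨h3, h2⟩, fun ⟨h1, h2⟩ => ⟨⟨h1.two_le, h2⟩, h1⟩⟩

lemma ppows_mono {Y Z : ℝ} (h : Y ≤ Z) : ppows Y ⊆ ppows Z := by
  unfold ppows
  exact Finset.filter_subset_filter _ (Finset.Icc_subset_Icc_right (Nat.floor_mono h))

/-- The contribution of non-prime prime powers is bounded. -/
lemma tail_bound : ∃ cR : ℝ, 0 < cR ∧ ∀ Y : ℝ,
    ∑ q ∈ (ppows Y).filter (fun q => ¬ q.Prime), Real.log q / q ≤ cR := by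
  obtain ⟨cG, hcG, hG⟩ := geom_aux
  obtain ⟨cH, hcH, hH⟩ := logsq_aux
  refine ⟨cG * cH, by positivity, fun Y => ?_⟩
  set n := ⌊Y⌋₊ with hn
  set S := (ppows Y).filter (fun q => ¬ q.Prime) with hS
  set F : ℕ × ℕ → ℝ := fun t => t.2 * Real.log t.1 * (1/(t.1:ℝ))^t.2 with hF
  set e : ℕ → ℕ × ℕ := fun q => (q.minFac, q.factorization q.minFac) with he
  have hmem : ∀ q ∈ S, IsPrimePow q ∧ ¬ q.Prime ∧ q ≤ n := by
    intro q hq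
    rw [hS, mem_filter] at hq
    have h2 := hq.1
    unfold ppows at h2
    rw [mem_filter, mem_Icc] at h2
    exact ⟨h2.2, hq.2, h2.1.2⟩
  have hround : ∀ q ∈ S, q.minFac ^ (q.factorization q.minFac) = q := by
    intro q hq
    exact (hmem q hq).1.minFac_pow_factorization_eq
  have hpk : ∀ q ∈ S, q.minFac.Prime ∧ 2 ≤ q.factorization q.minFac := by
    intro q hq
    obtain ⟨hpp, hnp, _⟩ := hmem q hq
    have hne1 : q ≠ 1 := hpp.ne_one
    have hp : q.minFac.Prime := Nat.minFac_prime hne1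
    refine ⟨hp, ?_⟩
    by_contra hk
    push_neg at hk
    interval_cases h : (q.factorization q.minFac)
    · have := hround q hq; rw [h] at this; simp at this; exact hne1 this.symm
    · have := hround q hq; rw [h, pow_one] at this; rw [← this] at hnp; exact hnp hp
  have h1 : ∑ q ∈ S, Real.log q / q = ∑ t ∈ S.image e, F t := by
    rw [Finset.sum_image (f := F) ?inj]
    · refine Finset.sum_congr rfl fun q hq => ?_
      obtain ⟨hp, hk⟩ := hpk q hq
      have hr := hround q hq
      have hcast : (q:ℝ) = ((q.minFac:ℝ)) ^ (q.factorization q.minFac) := by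
        conv_lhs => rw [← hr]
        push_cast
        ring
      have hlogq : Real.log q = (q.factorization q.minFac) * Real.log q.minFac := by
        rw [hcast, Real.log_pow]
      have hppos : (0:ℝ) < (q.minFac:ℝ) := by exact_mod_cast hp.pos
      rw [hF, he]
      simp only
      rw [hlogq, hcast, one_div, inv_pow]
      field_simp
    case inj =>
      intro a ha b hb hab
      have := hround a ha
      have hb' := hround b hb
      rw [he] at hab
      simp only [Prod.mk.injEq] at hab
      calc a = a.minFac ^ (a.factorization a.minFac) := this.symm
        _ = b.minFac ^ (b.factorization b.minFac) := by rw [hab.2, hab.1]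
        _ = b := hb'
  have h2 : S.image e ⊆ ((Icc 1 n).filter Nat.Prime) ×ˢ (Icc 2 n) := by
    intro t ht
    rw [Finset.mem_image] at ht
    obtain ⟨q, hq, rfl⟩ := ht
    obtain ⟨hp, hk⟩ := hpk q hq
    obtain ⟨hpp, _, hqn⟩ := hmem q hq
    rw [Finset.mem_product, mem_filter, mem_Icc, mem_Icc]
    have hr := hround q hq
    have hple : q.minFac ≤ q := Nat.minFac_le hpp.pos
    have hkle : q.factorization q.minFac ≤ n := by
      have h2k : 2 ^ (q.factorization q.minFac) ≤ q :=
        calc 2 ^ (q.factorization q.minFac) ≤ q.minFac ^ (q.factorization q.minFac) :=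
              Nat.pow_le_pow_left hp.two_le _
          _ = q := hr
      have := (q.factorization q.minFac).lt_two_pow_self
      omega
    exact ⟨⟨⟨hp.one_lt.le.trans' (by omega), hple.trans hqn⟩, hp⟩, ⟨hk, hkle⟩⟩
  have h3 : ∑ t ∈ S.image e, F t ≤ ∑ t ∈ ((Icc 1 n).filter Nat.Prime) ×ˢ (Icc 2 n), F t := by
    refine Finset.sum_le_sum_of_subset_of_nonneg h2 fun t ht _ => ?_
    rw [Finset.mem_product, mem_filter] at ht
    have h1t : (1:ℝ) ≤ t.1 := by exact_mod_cast ht.1.2.one_lt.le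
    have := Real.log_nonneg h1t
    positivity
  have h4 : ∑ t ∈ ((Icc 1 n).filter Nat.Prime) ×ˢ (Icc 2 n), F t ≤ cG * cH := by
    rw [Finset.sum_product]
    calc ∑ p ∈ (Icc 1 n).filter Nat.Prime, ∑ k ∈ Icc 2 n, F (p, k)
        ≤ ∑ p ∈ (Icc 1 n).filter Nat.Prime, cG * (Real.log p / (p:ℝ)^2) := by
          refine Finset.sum_le_sum fun p hp => ?_
          rw [mem_filter] at hp
          have hp2 : (2:ℝ) ≤ p := by exact_mod_cast hp.2.two_le
          have hppos : (0:ℝ) < p := by linarith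
          have hlognn : 0 ≤ Real.log p := Real.log_nonneg (by linarith)
          have hx1 : (0:ℝ) ≤ 1/(p:ℝ) := by positivity
          have hx2 : 1/(p:ℝ) ≤ 1/2 := by
            rw [div_le_div_iff₀ hppos (by norm_num)]; linarith
          calc ∑ k ∈ Icc 2 n, F (p, k)
              = Real.log p * ∑ k ∈ Icc 2 n, (k:ℝ) * (1/(p:ℝ))^k := by
                rw [Finset.mul_sum]
                exact Finset.sum_congr rfl fun k _ => by rw [hF]; ring
            _ ≤ Real.log p * (cG * (1/(p:ℝ))^2) := by
                have := hG (1/(p:ℝ)) n hx1 hx2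
                exact mul_le_mul_of_nonneg_left this hlognn
            _ = cG * (Real.log p / (p:ℝ)^2) := by
                rw [div_pow, one_pow]
                ring
      _ = cG * ∑ p ∈ (Icc 1 n).filter Nat.Prime, Real.log p / (p:ℝ)^2 := by
          rw [Finset.mul_sum]
      _ ≤ cG * ∑ m ∈ Icc 2 n, Real.log m / (m:ℝ)^2 := by
          refine mul_le_mul_of_nonneg_left ?_ hcG.le
          refine Finset.sum_le_sum_of_subset_of_nonneg ?_ fun m hm _ => ?_
          · intro p hp
            rw [mem_filter, mem_Icc] at hp
            rw [mem_Icc]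
            exact ⟨hp.2.two_le, hp.1.2⟩
          · rw [mem_Icc] at hm
            have h1m : (1:ℝ) ≤ m := by exact_mod_cast (by omega : 1 ≤ m)
            have := Real.log_nonneg h1m
            positivity
      _ ≤ cG * cH := mul_le_mul_of_nonneg_left (hH n) hcG.le
  linarith

/-- Mertens upper bound for prime powers: `∑_{q ∈ ppows Y} log q / q ≤ log Y + c₁`. -/
lemma T_upper : ∃ c₁ : ℝ, 0 < c₁ ∧ ∀ Y : ℝ, 2 ≤ Y →
    ∑ q ∈ ppows Y, Real.log q / q ≤ Real.log Y + c₁ := by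
  obtain ⟨cR, hcR, hR⟩ := tail_bound
  refine ⟨cR + 2, by linarith, fun Y hY => ?_⟩
  have hY0 : (0:ℝ) ≤ Y := by linarith
  set n := ⌊Y⌋₊ with hn
  have hn1 : 1 ≤ n := by
    rw [hn]
    exact Nat.le_floor (by exact_mod_cast (by linarith : (1:ℝ) ≤ Y))
  have hnY : (n:ℝ) ≤ Y := Nat.floor_le hY0
  rw [← Finset.sum_filter_add_sum_filter_not (ppows Y) Nat.Prime]
  have hprime : ∑ q ∈ (ppows Y).filter Nat.Prime, Real.log q / q
      ≤ Real.log n + 2 := by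
    refine le_trans ?_ (mertens_upper_primes hn1)
    refine Finset.sum_le_sum_of_subset_of_nonneg ?_ fun p hp _ => ?_
    · intro p hp
      rw [mem_filter] at hp
      have h2 := hp.1
      unfold ppows at h2
      rw [mem_filter, mem_Icc] at h2
      rw [mem_filter, mem_Icc]
      exact ⟨⟨by omega, h2.1.2⟩, hp.2⟩
    · rw [mem_filter, mem_Icc] at hp
      have h1p : (1:ℝ) ≤ p := by exact_mod_cast hp.1.1
      have := Real.log_nonneg h1p
      positivity
  have hlogn : Real.log n ≤ Real.log Y := Real.log_le_log (by exact_mod_cast hn1) hnY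
  have := hR Y
  linarith

/-- Mertens lower bound for prime powers. -/
lemma T_lower : ∀ Y : ℝ, 2 ≤ Y → Real.log Y - 2 ≤ ∑ q ∈ ppows Y, Real.log q / q := by
  intro Y hY
  have hY0 : (0:ℝ) ≤ Y := by linarith
  set n := ⌊Y⌋₊ with hn
  have hn1 : 1 ≤ n := Nat.le_floor (by exact_mod_cast (by linarith : (1:ℝ) ≤ Y))
  have step1 : ∑ d ∈ Icc 1 n, Λ d / d ≤ ∑ q ∈ ppows Y, Real.log q / q := by
    have heq : ∑ d ∈ Icc 1 n, Λ d / d = ∑ q ∈ ppows Y, Λ q / q := by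
      rw [eq_comm]
      unfold ppows
      rw [← hn]
      refine Finset.sum_subset ?_ ?_
      · intro q hq
        rw [mem_filter, mem_Icc] at hq
        rw [mem_Icc]
        omega
      · intro d hd hnd
        rw [mem_Icc] at hd
        have : ¬ IsPrimePow d := by
          intro hpp
          apply hnd
          rw [mem_filter, mem_Icc]
          exact ⟨⟨hpp.two_le, hd.2⟩, hpp⟩
        rw [ArithmeticFunction.vonMangoldt_apply, if_neg this]
        simp
    rw [heq]
    refine Finset.sum_le_sum fun q hq => ?_
    rw [mem_ppows_iff hY0] at hq
    have hq2 : 2 ≤ q := hq.1.two_le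
    have hqpos : (0:ℝ) < q := by exact_mod_cast (by omega : 0 < q)
    have : Λ q ≤ Real.log q := by
      rw [ArithmeticFunction.vonMangoldt_apply, if_pos hq.1]
      apply Real.log_le_log
      · exact_mod_cast (Nat.minFac_prime (by omega : q ≠ 1)).pos
      · exact_mod_cast Nat.minFac_le (by omega)
    gcongr
  have step2 := mertens_lower hn1
  have step3 : Real.log Y - 1 ≤ Real.log n := by
    have hfl : Y - 1 ≤ (n:ℝ) := by
      have := Nat.lt_floor_add_one Y
      rw [← hn] at this
      linarith
    have hY1 : (0:ℝ) < Y - 1 := by linarith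
    have h1 : Real.log (Y - 1) ≤ Real.log n := Real.log_le_log hY1 hfl
    have h2 : Real.log Y - Real.log (Y-1) ≤ 1 := by
      rw [← Real.log_div (by linarith) (ne_of_gt hY1)]
      have h3 : Real.log (Y / (Y-1)) ≤ Y/(Y-1) - 1 :=
        Real.log_le_sub_one_of_pos (by positivity)
      have h4 : Y/(Y-1) - 1 = 1/(Y-1) := by field_simp; ring
      have h5 : 1/(Y-1) ≤ 1 := by
        rw [div_le_one hY1]; linarith
      linarith
    linarith
  linarith


/-- If `∑_{X^{1/4} < p^k ≤ X} |A_g(X) - A_g(X/p^k) - λ(X) log p^k|/p^k = o(B_g(X))`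
with `λ ≥ 0`, then `λ(X) ≪ B_g(X)/log X`. -/
theorem stmt15 (g : ℕ → ℝ) (hg : IsAdditiveR g) (lam : ℝ → ℝ)
    (hlamnn : ∀ X : ℝ, 0 ≤ lam X)
    (hsmall : ∀ ε : ℝ, 0 < ε → ∃ X₀ : ℝ, ∀ X : ℝ, X₀ ≤ X →
      ∑ q ∈ (ppows X).filter (fun q : ℕ => X ^ ((1 : ℝ) / 4) < (q : ℝ)),
          |AgR g X - AgR g (X / (q : ℝ)) - lam X * Real.log q| / (q : ℝ)
        ≤ ε * BgR g X) :
    ∃ C : ℝ, 0 < C ∧ ∃ X₀ : ℝ, ∀ X : ℝ, X₀ ≤ X →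
      lam X ≤ C * BgR g X / Real.log X := by
  obtain ⟨c₁, hc₁, hT⟩ := T_upper
  obtain ⟨X₁, hX₁⟩ := hsmall 1 one_pos
  set c₂ : ℝ := 2 + 2*c₁ with hc₂def
  set c₃ : ℝ := 2 + 4*c₁ with hc₃def
  have hc₂ : 0 < c₂ := by rw [hc₂def]; linarith
  have hc₃ : 0 < c₃ := by rw [hc₃def]; linarith
  have hsqrtc₂ : 0 ≤ Real.sqrt c₂ := Real.sqrt_nonneg _
  refine ⟨8 * (1 + Real.sqrt c₂ * c₃), by positivity,
    max X₁ (max 16 (Real.exp (8*(2+c₁)))), fun X hX => ?_⟩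
  -- basic facts about X
  have hX16 : (16:ℝ) ≤ X := le_trans (le_max_left _ _) (le_trans (le_max_right _ _) hX)
  have hXexp : Real.exp (8*(2+c₁)) ≤ X :=
    le_trans (le_max_right _ _) (le_trans (le_max_right _ _) hX)
  have hXX₁ : X₁ ≤ X := le_trans (le_max_left _ _) hX
  have hX0 : (0:ℝ) < X := by linarith
  have hX1 : (1:ℝ) ≤ X := by linarith
  have hlogX : 8*(2+c₁) ≤ Real.log X := by
    have := Real.log_le_log (Real.exp_pos _) hXexp
    rwa [Real.log_exp] at this
  have hlogX1 : (1:ℝ) ≤ Real.log X := by linarith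
  have hlogX0 : (0:ℝ) < Real.log X := by linarith
  set R4 : ℝ := X ^ ((1:ℝ)/4) with hR4def
  set R2 : ℝ := X ^ ((1:ℝ)/2) with hR2def
  have hR4_2 : (2:ℝ) ≤ R4 := by
    rw [hR4def]
    calc (2:ℝ) = 16 ^ ((1:ℝ)/4) := by
          rw [show (16:ℝ) = 2^(4:ℕ) by norm_num, ← Real.rpow_natCast 2 4, ← Real.rpow_mul
            (by norm_num)]
          norm_num
      _ ≤ X ^ ((1:ℝ)/4) := Real.rpow_le_rpow (by norm_num) hX16 (by norm_num)
  have hR2_2 : (2:ℝ) ≤ R2 := by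
    rw [hR2def]
    calc (2:ℝ) ≤ 16 ^ ((1:ℝ)/2) := by
          rw [show (16:ℝ) = 4^(2:ℕ) by norm_num, ← Real.rpow_natCast 4 2, ← Real.rpow_mul
            (by norm_num)]
          norm_num
      _ ≤ X ^ ((1:ℝ)/2) := Real.rpow_le_rpow (by norm_num) hX16 (by norm_num)
  have hR4R2 : R4 ≤ R2 :=
    Real.rpow_le_rpow_of_exponent_le hX1 (by norm_num)
  have hR2X : R2 ≤ X := by
    calc R2 ≤ X ^ ((1:ℝ)) := Real.rpow_le_rpow_of_exponent_le hX1 (by norm_num)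
      _ = X := Real.rpow_one X
  have hR2sq : R2 * R2 = X := by
    rw [hR2def, ← Real.rpow_add hX0]
    norm_num
  have hlogR2 : Real.log R2 = Real.log X / 2 := by
    rw [hR2def, Real.log_rpow hX0]; ring
  have hlogR4 : Real.log R4 = Real.log X / 4 := by
    rw [hR4def, Real.log_rpow hX0]; ring
  set B : ℝ := BgR g X with hBdef
  have hB0 : 0 ≤ B := Real.sqrt_nonneg _
  have hBsq : B^2 = ∑ q ∈ ppows X, (g q)^2 / q := by
    rw [hBdef]
    unfold BgR
    rw [Real.sq_sqrt]
    exact Finset.sum_nonneg fun q _ => by positivity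
  set Q : Finset ℕ := (ppows R2).filter (fun q => R4 < (q:ℝ)) with hQdef
  set P : Finset ℕ := (ppows X).filter (fun q : ℕ => R4 < (q:ℝ)) with hPdef
  have hQP : Q ⊆ P := by
    rw [hQdef, hPdef]
    exact Finset.filter_subset_filter _ (ppows_mono hR2X)
  -- Step E : lower bound for ∑_{q ∈ Q} log q / q
  have hE : Real.log X / 8 ≤ ∑ q ∈ Q, Real.log q / q := by
    have hsplit := Finset.sum_filter_add_sum_filter_not (ppows R2)
      (fun q : ℕ => R4 < (q:ℝ)) (fun q : ℕ => Real.log q / q)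
    have hnotfilter : (ppows R2).filter (fun q : ℕ => ¬ R4 < (q:ℝ)) = ppows R4 := by
      ext q
      rw [mem_filter, mem_ppows_iff (by linarith : (0:ℝ) ≤ R2),
        mem_ppows_iff (by linarith : (0:ℝ) ≤ R4)]
      constructor
      · rintro ⟨⟨h1, h2⟩, h3⟩
        push_neg at h3
        exact ⟨h1, h3⟩
      · rintro ⟨h1, h2⟩
        exact ⟨⟨h1, le_trans h2 hR4R2⟩, by push_neg; exact h2⟩
    rw [hnotfilter] at hsplit
    have hup := hT R4 hR4_2
    have hlo := T_lower R2 hR2_2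
    have hQeq : ∑ q ∈ Q, Real.log q / q
        = (∑ q ∈ ppows R2, Real.log q / q) - ∑ q ∈ ppows R4, Real.log q / q := by
      rw [hQdef]
      linarith [hsplit]
    rw [hQeq]
    rw [hlogR2] at hlo
    rw [hlogR4] at hup
    linarith
  -- Step A2 : |A(X) - A(X/q)| ≤ B * sqrt c₂ for q ∈ Q
  have hA2 : ∀ q ∈ Q, |AgR g X - AgR g (X / (q:ℝ))| ≤ B * Real.sqrt c₂ := by
    intro q hq
    rw [hQdef, mem_filter, mem_ppows_iff (by linarith : (0:ℝ) ≤ R2)] at hq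
    obtain ⟨⟨hqpp, hqR2⟩, hqR4⟩ := hq
    have hq2 : 2 ≤ q := hqpp.two_le
    have hq0 : (0:ℝ) < q := by exact_mod_cast (by omega : 0 < q)
    have hq1 : (1:ℝ) ≤ q := by exact_mod_cast (by omega : 1 ≤ q)
    have hXq0 : 0 ≤ X / (q:ℝ) := by positivity
    have hXqR2 : R2 ≤ X / (q:ℝ) := by
      rw [le_div_iff₀ hq0, ← hR2sq]
      exact mul_le_mul_of_nonneg_left hqR2 (by linarith)
    have hsub : ppows (X / (q:ℝ)) ⊆ ppows X :=
      ppows_mono (div_le_self hX0.le hq1)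
    set D : Finset ℕ := ppows X \ ppows (X / (q:ℝ)) with hDdef
    -- each element of D is > R2
    have hDlarge : ∀ r ∈ D, R2 < (r:ℝ) ∧ r ∈ ppows X := by
      intro r hr
      rw [hDdef, Finset.mem_sdiff] at hr
      obtain ⟨hr1, hr2⟩ := hr
      have hrpp : IsPrimePow r := ((mem_ppows_iff hX0.le).1 hr1).1
      refine ⟨?_, hr1⟩
      by_contra hcon
      push_neg at hcon
      exact hr2 ((mem_ppows_iff hXq0).2 ⟨hrpp, le_trans hcon hXqR2⟩)
    -- S_q ≤ c₂
    have hSq : ∑ r ∈ D, 1 / (r:ℝ) ≤ c₂ := by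
      have step : ∀ r ∈ D, 1 / (r:ℝ) ≤ (2 / Real.log X) * (Real.log r / r) := by
        intro r hr
        obtain ⟨hrR2, hrX⟩ := hDlarge r hr
        have hr0 : (0:ℝ) < r := by linarith
        have hlogr : Real.log X / 2 ≤ Real.log r := by
          rw [← hlogR2]
          exact Real.log_le_log (by linarith) hrR2.le
        rw [div_le_iff₀ hr0]
        calc (1:ℝ) ≤ (2/Real.log X) * Real.log r := by
              rw [div_mul_eq_mul_div, le_div_iff₀ hlogX0, one_mul]
              linarith
          _ = (2/Real.log X) * (Real.log r / r) * r := by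
              field_simp
      have h2 : ∑ r ∈ D, 1/(r:ℝ) ≤ (2/Real.log X) * ∑ r ∈ D, Real.log r / r := by
        rw [Finset.mul_sum]
        exact Finset.sum_le_sum step
      have h3 : ∑ r ∈ D, Real.log r / r ≤ ∑ r ∈ ppows X, Real.log r / r := by
        refine Finset.sum_le_sum_of_subset_of_nonneg (Finset.sdiff_subset) ?_
        intro r hr _
        rw [mem_ppows_iff hX0.le] at hr
        have h1r : (1:ℝ) ≤ r := by exact_mod_cast hr.1.one_lt.le
        have := Real.log_nonneg h1r
        positivity
      have h4 := hT X (by linarith)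
      have h5 : (2/Real.log X) * ∑ r ∈ ppows X, Real.log r / r
          ≤ (2/Real.log X) * (Real.log X + c₁) := by
        have : (0:ℝ) ≤ 2/Real.log X := by positivity
        exact mul_le_mul_of_nonneg_left h4 this
      have h6 : (2/Real.log X) * (Real.log X + c₁) ≤ 2 + 2*c₁ := by
        rw [div_mul_eq_mul_div, div_le_iff₀ hlogX0]
        have : (0:ℝ) ≤ c₁ := hc₁.le
        nlinarith [hlogX1]
      have h3' : (2/Real.log X) * ∑ r ∈ D, Real.log r / r
          ≤ (2/Real.log X) * ∑ r ∈ ppows X, Real.log r / r := by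
        have : (0:ℝ) ≤ 2/Real.log X := by positivity
        exact mul_le_mul_of_nonneg_left h3 this
      rw [hc₂def]
      linarith
    -- Cauchy–Schwarz
    have hdiff : AgR g X - AgR g (X / (q:ℝ))
        = ∑ r ∈ D, g r * (1 / (r:ℝ)) * (1 - 1/((r.minFac : ℕ):ℝ)) := by
      rw [hDdef, Finset.sum_sdiff_eq_sub hsub]
      rfl
    rw [hdiff]
    have htri : |∑ r ∈ D, g r * (1/(r:ℝ)) * (1 - 1/((r.minFac : ℕ):ℝ))|
        ≤ ∑ r ∈ D, |g r| * (1/(r:ℝ)) := by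
      refine le_trans (Finset.abs_sum_le_sum_abs _ _) (Finset.sum_le_sum fun r hr => ?_)
      obtain ⟨hrR2, hrX⟩ := hDlarge r hr
      have hr0 : (0:ℝ) < r := by linarith
      have hrpp := ((mem_ppows_iff hX0.le).1 hrX).1
      have hmf2 : 2 ≤ r.minFac := (Nat.minFac_prime hrpp.ne_one).two_le
      have hmf : (2:ℝ) ≤ (r.minFac : ℝ) := by exact_mod_cast hmf2
      have hfac : 0 ≤ 1 - 1/((r.minFac : ℕ):ℝ) := by
        have : 1/((r.minFac : ℕ):ℝ) ≤ 1/2 := by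
          rw [div_le_div_iff₀ (by linarith) (by norm_num)]; linarith
        linarith
      have hfac1 : 1 - 1/((r.minFac : ℕ):ℝ) ≤ 1 := by
        have : 0 ≤ 1/((r.minFac : ℕ):ℝ) := by positivity
        linarith
      rw [abs_mul, abs_mul, abs_of_nonneg (by positivity : (0:ℝ) ≤ 1/(r:ℝ)),
        abs_of_nonneg hfac]
      calc |g r| * (1/(r:ℝ)) * (1 - 1/((r.minFac : ℕ):ℝ))
          ≤ |g r| * (1/(r:ℝ)) * 1 := by
            have : (0:ℝ) ≤ |g r| * (1/(r:ℝ)) := by positivity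
            exact mul_le_mul_of_nonneg_left hfac1 this
        _ = |g r| * (1/(r:ℝ)) := by ring
    have hCS : ∑ r ∈ D, |g r| * (1/(r:ℝ))
        ≤ Real.sqrt (∑ r ∈ D, (g r)^2 / r) * Real.sqrt (∑ r ∈ D, 1/(r:ℝ)) := by
      have := Real.sum_mul_le_sqrt_mul_sqrt D (fun r => |g r| / Real.sqrt r)
        (fun r => 1 / Real.sqrt r)
      have heq1 : ∀ r ∈ D, |g r| / Real.sqrt r * (1 / Real.sqrt r) = |g r| * (1/(r:ℝ)) := by
        intro r hr
        obtain ⟨hrR2, hrX⟩ := hDlarge r hr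
        have hr0 : (0:ℝ) < r := by linarith
        have hs0 : (0:ℝ) < Real.sqrt r := Real.sqrt_pos.2 hr0
        rw [div_mul_div_comm, mul_one, Real.mul_self_sqrt hr0.le, mul_one_div]
      have heq2 : ∀ r ∈ D, (|g r| / Real.sqrt r)^2 = (g r)^2 / r := by
        intro r hr
        obtain ⟨hrR2, hrX⟩ := hDlarge r hr
        have hr0 : (0:ℝ) < r := by linarith
        rw [div_pow, sq_abs, Real.sq_sqrt hr0.le]
      have heq3 : ∀ r ∈ D, (1 / Real.sqrt r)^2 = 1/(r:ℝ) := by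
        intro r hr
        obtain ⟨hrR2, hrX⟩ := hDlarge r hr
        have hr0 : (0:ℝ) < r := by linarith
        rw [div_pow, one_pow, Real.sq_sqrt hr0.le]
      rw [Finset.sum_congr rfl heq1, Finset.sum_congr rfl heq2,
        Finset.sum_congr rfl heq3] at this
      exact this
    have hfirst : Real.sqrt (∑ r ∈ D, (g r)^2 / r) ≤ B := by
      rw [hBdef]
      unfold BgR
      apply Real.sqrt_le_sqrt
      refine Finset.sum_le_sum_of_subset_of_nonneg (by rw [hDdef]; exact Finset.sdiff_subset)
        fun r hr _ => by positivity
    have hsecond : Real.sqrt (∑ r ∈ D, 1/(r:ℝ)) ≤ Real.sqrt c₂ :=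
      Real.sqrt_le_sqrt hSq
    calc |∑ r ∈ D, g r * (1/(r:ℝ)) * (1 - 1/((r.minFac : ℕ):ℝ))|
        ≤ ∑ r ∈ D, |g r| * (1/(r:ℝ)) := htri
      _ ≤ Real.sqrt (∑ r ∈ D, (g r)^2 / r) * Real.sqrt (∑ r ∈ D, 1/(r:ℝ)) := hCS
      _ ≤ B * Real.sqrt c₂ := by
          apply mul_le_mul hfirst hsecond (Real.sqrt_nonneg _) hB0
  -- Step A3 : ∑_{q ∈ Q} 1/q ≤ c₃
  have hA3 : ∑ q ∈ Q, 1/(q:ℝ) ≤ c₃ := by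
    have step : ∀ q ∈ Q, 1 / (q:ℝ) ≤ (4 / Real.log X) * (Real.log q / q) := by
      intro q hq
      rw [hQdef, mem_filter, mem_ppows_iff (by linarith : (0:ℝ) ≤ R2)] at hq
      obtain ⟨⟨hqpp, hqR2⟩, hqR4⟩ := hq
      have hq0 : (0:ℝ) < q := by
        have := hqpp.two_le
        exact_mod_cast (by omega : 0 < q)
      have hlogq : Real.log X / 4 ≤ Real.log q := by
        rw [← hlogR4]
        exact Real.log_le_log (by linarith) hqR4.le
      rw [div_le_iff₀ hq0]
      calc (1:ℝ) ≤ (4/Real.log X) * Real.log q := by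
            rw [div_mul_eq_mul_div, le_div_iff₀ hlogX0, one_mul]
            linarith
        _ = (4/Real.log X) * (Real.log q / q) * q := by
            field_simp
    have h2 : ∑ q ∈ Q, 1/(q:ℝ) ≤ (4/Real.log X) * ∑ q ∈ Q, Real.log q / q := by
      rw [Finset.mul_sum]
      exact Finset.sum_le_sum step
    have h3 : ∑ q ∈ Q, Real.log q / q ≤ ∑ q ∈ ppows R2, Real.log q / q := by
      refine Finset.sum_le_sum_of_subset_of_nonneg (Finset.filter_subset _ _) ?_
      intro q hq _
      rw [mem_ppows_iff (by linarith : (0:ℝ) ≤ R2)] at hq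
      have h1q : (1:ℝ) ≤ q := by exact_mod_cast hq.1.one_lt.le
      have := Real.log_nonneg h1q
      positivity
    have h4 := hT R2 hR2_2
    rw [hlogR2] at h4
    have h5 : (4/Real.log X) * ∑ q ∈ Q, Real.log q / q
        ≤ (4/Real.log X) * (Real.log X / 2 + c₁) := by
      have : (0:ℝ) ≤ 4/Real.log X := by positivity
      exact mul_le_mul_of_nonneg_left (le_trans h3 h4) this
    have h6 : (4/Real.log X) * (Real.log X / 2 + c₁) ≤ 2 + 4*c₁ := by
      rw [div_mul_eq_mul_div, div_le_iff₀ hlogX0]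
      have : (0:ℝ) ≤ c₁ := hc₁.le
      nlinarith [hlogX1]
    rw [hc₃def]
    linarith
  -- Step A : main chain
  have hmain : lam X * ∑ q ∈ Q, Real.log q / q ≤ B * (1 + Real.sqrt c₂ * c₃) := by
    have htermwise : ∀ q ∈ Q, lam X * (Real.log q / q)
        ≤ |AgR g X - AgR g (X / (q:ℝ)) - lam X * Real.log q| / q
          + (B * Real.sqrt c₂) * (1/(q:ℝ)) := by
      intro q hq
      have hA2q := hA2 q hq
      rw [hQdef, mem_filter, mem_ppows_iff (by linarith : (0:ℝ) ≤ R2)] at hq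
      obtain ⟨⟨hqpp, hqR2⟩, hqR4⟩ := hq
      have hq0 : (0:ℝ) < q := by
        have := hqpp.two_le
        exact_mod_cast (by omega : 0 < q)
      have htri : lam X * Real.log q
          ≤ |AgR g X - AgR g (X / (q:ℝ)) - lam X * Real.log q|
            + |AgR g X - AgR g (X / (q:ℝ))| := by
        have h1 : lam X * Real.log q ≤ |lam X * Real.log q| := le_abs_self _
        have h2 : |lam X * Real.log q|
            = |(AgR g X - AgR g (X / (q:ℝ))) - (AgR g X - AgR g (X / (q:ℝ)) - lam X * Real.log q)| := by
          congr 1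
          ring
        rw [h2] at h1
        refine le_trans h1 (le_trans (abs_sub _ _) ?_)
        linarith
      calc lam X * (Real.log q / q) = lam X * Real.log q / q := by ring
        _ ≤ (|AgR g X - AgR g (X / (q:ℝ)) - lam X * Real.log q|
              + |AgR g X - AgR g (X / (q:ℝ))|) / q := by gcongr
        _ = |AgR g X - AgR g (X / (q:ℝ)) - lam X * Real.log q| / q
              + |AgR g X - AgR g (X / (q:ℝ))| * (1/(q:ℝ)) := by ring
        _ ≤ |AgR g X - AgR g (X / (q:ℝ)) - lam X * Real.log q| / q
              + (B * Real.sqrt c₂) * (1/(q:ℝ)) := by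
            have h1q : (0:ℝ) ≤ 1/(q:ℝ) := by positivity
            have := mul_le_mul_of_nonneg_right hA2q h1q
            linarith
    have hsum1 : ∑ q ∈ Q, |AgR g X - AgR g (X / (q:ℝ)) - lam X * Real.log q| / q
        ≤ 1 * B := by
      have hsub : ∑ q ∈ Q, |AgR g X - AgR g (X / (q:ℝ)) - lam X * Real.log q| / q
          ≤ ∑ q ∈ P, |AgR g X - AgR g (X / (q:ℝ)) - lam X * Real.log q| / q := by
        refine Finset.sum_le_sum_of_subset_of_nonneg hQP fun q hq _ => by positivity
      have happ := hX₁ X hXX₁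
      rw [← hBdef] at happ
      rw [hPdef, hR4def] at hsub
      linarith
    calc lam X * ∑ q ∈ Q, Real.log q / q
        = ∑ q ∈ Q, lam X * (Real.log q / q) := Finset.mul_sum _ _ _
      _ ≤ ∑ q ∈ Q, (|AgR g X - AgR g (X / (q:ℝ)) - lam X * Real.log q| / q
            + (B * Real.sqrt c₂) * (1/(q:ℝ))) := Finset.sum_le_sum htermwise
      _ = (∑ q ∈ Q, |AgR g X - AgR g (X / (q:ℝ)) - lam X * Real.log q| / q)
            + (B * Real.sqrt c₂) * ∑ q ∈ Q, 1/(q:ℝ) := by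
          rw [Finset.sum_add_distrib, ← Finset.mul_sum]
      _ ≤ 1 * B + (B * Real.sqrt c₂) * c₃ := by
          have h2 : (B * Real.sqrt c₂) * ∑ q ∈ Q, 1/(q:ℝ) ≤ (B * Real.sqrt c₂) * c₃ :=
            mul_le_mul_of_nonneg_left hA3 (by positivity)
          linarith [hsum1]
      _ = B * (1 + Real.sqrt c₂ * c₃) := by ring
  -- conclude
  have hfinal : lam X * (Real.log X / 8) ≤ B * (1 + Real.sqrt c₂ * c₃) :=
    le_trans (mul_le_mul_of_nonneg_left hE (hlamnn X)) hmain
  rw [le_div_iff₀ hlogX0]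
  have hrearr : lam X * Real.log X = 8 * (lam X * (Real.log X / 8)) := by ring
  rw [hrearr]
  calc 8 * (lam X * (Real.log X / 8)) ≤ 8 * (B * (1 + Real.sqrt c₂ * c₃)) := by linarith
    _ = 8 * (1 + Real.sqrt c₂ * c₃) * B := by ring
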